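/- Let $\eta_j = \frac{\alpha_j}{\mu(j+E)}$ with $\alpha_j \ge 4$, $\mu > 0$, $E \ge 1$. Then for all integers $1 \le i \le t$, $\prod_{j=i}^{t}\left(1 - \frac{\mu \eta_j}{2}\right) \le \frac{(i+E)^2}{(t+E-1)^2}$, provided each factor $1 - \frac{\mu\eta_j}{2}$ is nonnegative. -/

import Mathlib

lemma stmt5_factor (μ : ℝ) (hμ : 0 < μ) (E : ℕ) (hE : 1 ≤ E)
    (α η : ℕ → ℝ) (hα : ∀ j, 4 ≤ α j)
    (hη : ∀ j, η j = α j / (μ * ((j : ℝ) + E))) (j : ℕ) :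
    1 - μ * η j / 2 ≤ ((j : ℝ) + E - 2) / ((j : ℝ) + E) := by
  have hE1 : (1 : ℝ) ≤ E := by exact_mod_cast hE
  have hjE : (0 : ℝ) < (j : ℝ) + E := by positivity
  have h1 : μ * η j / 2 = α j / (2 * ((j : ℝ) + E)) := by
    rw [hη]; field_simp
  rw [h1]
  have h2 : (4 : ℝ) / (2 * ((j : ℝ) + E)) ≤ α j / (2 * ((j : ℝ) + E)) := by
    apply div_le_div_of_nonneg_right (hα j)
    · positivity
  have : ((j : ℝ) + E - 2) / ((j : ℝ) + E) = 1 - 4 / (2 * ((j : ℝ) + E)) := by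
    field_simp; ring
  rw [this]
  linarith

lemma stmt5_aux (μ : ℝ) (hμ : 0 < μ) (E : ℕ) (hE : 1 ≤ E)
    (α η : ℕ → ℝ) (hα : ∀ j, 4 ≤ α j)
    (hη : ∀ j, η j = α j / (μ * ((j : ℝ) + E)))
    (i : ℕ) (hi : 1 ≤ i) :
    ∀ t, i ≤ t → (∀ j ∈ Finset.Icc i t, 0 ≤ 1 - μ * η j / 2) →
      ∏ j ∈ Finset.Icc i t, (1 - μ * η j / 2) ≤
        ((i : ℝ) + E) ^ 2 / (((t : ℝ) + E - 1) * ((t : ℝ) + E)) := by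
  have hE1 : (1 : ℝ) ≤ E := by exact_mod_cast hE
  have hi1 : (1 : ℝ) ≤ i := by exact_mod_cast hi
  intro t ht
  induction t, ht using Nat.le_induction with
  | base =>
    intro hn
    rw [Finset.Icc_self, Finset.prod_singleton]
    have h1 := stmt5_factor μ hμ E hE α η hα hη i
    have hx : (2 : ℝ) ≤ (i : ℝ) + E := by linarith
    have h2 : ((i : ℝ) + E - 2) / ((i : ℝ) + E) ≤
        ((i : ℝ) + E) ^ 2 / (((i : ℝ) + E - 1) * ((i : ℝ) + E)) := by
      rw [div_le_div_iff₀ (by linarith) (by nlinarith)]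
      nlinarith
    linarith
  | succ t ht ih =>
    intro hn
    have hle : i ≤ t + 1 := by omega
    rw [Finset.prod_Icc_succ_top hle]
    have hIH := ih (fun j hj => hn j (by
      simp only [Finset.mem_Icc] at hj ⊢; omega))
    have hf := stmt5_factor μ hμ E hE α η hα hη (t + 1)
    have hf0 : 0 ≤ 1 - μ * η (t + 1) / 2 := hn (t + 1) (by
      simp only [Finset.mem_Icc]; omega)
    have ht1 : (1 : ℝ) ≤ t := by
      have : (i : ℝ) ≤ t := by exact_mod_cast ht
      linarith
    have hA0 : 0 ≤ ((i : ℝ) + E) ^ 2 / (((t : ℝ) + E - 1) * ((t : ℝ) + E)) := by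
      apply div_nonneg (by positivity)
      nlinarith
    have hB : ((t + 1 : ℕ) : ℝ) + E - 2 = (t : ℝ) + E - 1 := by push_cast; ring
    have hB2 : ((t + 1 : ℕ) : ℝ) + E = (t : ℝ) + E + 1 := by push_cast; ring
    rw [hB, hB2] at hf
    calc (∏ j ∈ Finset.Icc i t, (1 - μ * η j / 2)) * (1 - μ * η (t + 1) / 2)
        ≤ (((i : ℝ) + E) ^ 2 / (((t : ℝ) + E - 1) * ((t : ℝ) + E))) *
          (((t : ℝ) + E - 1) / ((t : ℝ) + E + 1)) := by
          apply mul_le_mul hIH hf hf0 hA0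
      _ = ((i : ℝ) + E) ^ 2 / ((((t + 1 : ℕ) : ℝ) + E - 1) * (((t + 1 : ℕ) : ℝ) + E)) := by
          have hne : (t : ℝ) + E - 1 ≠ 0 := ne_of_gt (by linarith)
          push_cast
          rw [div_mul_div_comm,
            show ((t:ℝ)+E-1)*((t:ℝ)+E)*((t:ℝ)+E+1) = ((t:ℝ)+E-1)*(((t:ℝ)+E)*((t:ℝ)+E+1)) from by ring,
            show ((i:ℝ)+E)^2*((t:ℝ)+E-1) = ((t:ℝ)+E-1)*((i:ℝ)+E)^2 from by ring,
            mul_div_mul_left _ _ hne]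
          congr 1
          ring

theorem stmt_5 (μ : ℝ) (hμ : 0 < μ) (E : ℕ) (hE : 1 ≤ E)
    (α η : ℕ → ℝ) (hα : ∀ j, 4 ≤ α j)
    (hη : ∀ j, η j = α j / (μ * ((j : ℝ) + E)))
    (i t : ℕ) (hi : 1 ≤ i) (hit : i ≤ t)
    (hnonneg : ∀ j ∈ Finset.Icc i t, 0 ≤ 1 - μ * η j / 2) :
    ∏ j ∈ Finset.Icc i t, (1 - μ * η j / 2) ≤
      ((i : ℝ) + E) ^ 2 / ((t : ℝ) + E - 1) ^ 2 := by
  have hE1 : (1 : ℝ) ≤ E := by exact_mod_cast hE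
  have ht1 : (1 : ℝ) ≤ t := by
    have : (i : ℝ) ≤ t := by exact_mod_cast hit
    have : (1 : ℝ) ≤ i := by exact_mod_cast hi
    linarith [show (i:ℝ) ≤ t by exact_mod_cast hit]
  have h := stmt5_aux μ hμ E hE α η hα hη i hi t hit hnonneg
  have h2 : ((i : ℝ) + E) ^ 2 / (((t : ℝ) + E - 1) * ((t : ℝ) + E)) ≤
      ((i : ℝ) + E) ^ 2 / ((t : ℝ) + E - 1) ^ 2 := by
    apply div_le_div_of_nonneg_left (by positivity) (by nlinarith)
    nlinarith
  linarith
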